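/- The polynomial 44x(1+x)^6 + 484x^2(1+x)^4 + 784x^3(1+x)^2 + 120x^4 has only real zeros. -/

import Mathlib

lemma cubic_aux (s t : ℝ)
    (h1 : 484 + 1568*s + 360*s^2 - 120*t^2 = 0)
    (h2 : 44 + 484*s + 784*(s^2 - t^2) + 120*(s^3 - 3*s*t^2) = 0) : False := by
  nlinarith [sq_nonneg t, sq_nonneg s, sq_nonneg (s+1), sq_nonneg (s*t), sq_nonneg (t*t), sq_nonneg (s+3), sq_nonneg (3*s+1), sq_nonneg (s^2+t^2)]

lemma quad_aux (s a b : ℝ) (hs : s < 0) (hb2 : 0 < b^2)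
    (h1 : 2*s*(1+a) = 1) (h2 : s*((1+a)^2 - b^2) = a) : False := by
  have h3 : 0 < (-s) * b^2 := mul_pos (neg_pos.mpr hs) hb2
  nlinarith [sq_nonneg (1+a), mul_pos_of_neg_of_neg hs hs]

lemma sneg (s : ℝ) (h : 44 + 484*s + 784*s^2 + 120*s^3 = 0) : s < 0 := by
  nlinarith [sq_nonneg s, sq_nonneg (s+1)]

theorem stmt_17 :
    ∀ z : ℂ, 44 * z * (1 + z) ^ 6 + 484 * z ^ 2 * (1 + z) ^ 4 + 784 * z ^ 3 * (1 + z) ^ 2 +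
        120 * z ^ 4 = 0 → z.im = 0 := by
  intro z h
  by_contra hbim
  have hz1 : (1 : ℂ) + z ≠ 0 := by
    intro h0
    apply hbim
    have : z = -1 := by linear_combination h0
    rw [this]
    simp
  set u : ℂ := z / (1+z)^2 with hudef
  have huz : u * (1+z)^2 = z := by
    rw [hudef]; exact div_mul_cancel₀ _ (pow_ne_zero 2 hz1)
  have key : (1+z)^8 * (44*u + 484*u^2 + 784*u^3 + 120*u^4) = 0 := by
    have e : (1+z)^8 * (44*u + 484*u^2 + 784*u^3 + 120*u^4)
        = 44 * z * (1 + z) ^ 6 + 484 * z ^ 2 * (1 + z) ^ 4 + 784 * z ^ 3 * (1 + z) ^ 2 +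
          120 * z ^ 4 := by
      linear_combination (44*(1+z)^6 + 484*(1+z)^4*(u*(1+z)^2 + z) +
        784*(1+z)^2*((u*(1+z)^2)^2 + u*(1+z)^2*z + z^2) +
        120*((u*(1+z)^2)^3 + (u*(1+z)^2)^2*z + u*(1+z)^2*z^2 + z^3)) * huz
    rw [e, h]
  have hsum : 44*u + 484*u^2 + 784*u^3 + 120*u^4 = 0 := by
    rcases mul_eq_zero.mp key with h' | h'
    · exact absurd h' (pow_ne_zero _ hz1)
    · exact h'
  have hfac : u * (44 + 484*u + 784*u^2 + 120*u^3) = 0 := by linear_combination hsum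
  rcases mul_eq_zero.mp hfac with h0 | hq
  · rw [h0, zero_mul] at huz
    exact hbim (by rw [← huz]; rfl)
  · set s := u.re with hs
    set t := u.im with ht
    have e1 : 44 + 484*s + 784*(s^2 - t^2) + 120*(s^3 - 3*s*t^2) = 0 := by
      have := congrArg Complex.re hq
      simp [Complex.add_re, Complex.mul_re, Complex.mul_im, pow_succ, pow_zero] at this
      linarith [this]
    have e2 : t * (484 + 1568*s + 360*s^2 - 120*t^2) = 0 := by
      have := congrArg Complex.im hq
      simp [Complex.add_im, Complex.mul_re, Complex.mul_im, pow_succ, pow_zero] at this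
      nlinarith [this]
    have ht0 : t = 0 := by
      rcases mul_eq_zero.mp e2 with h' | h'
      · exact h'
      · exact (cubic_aux s t h' e1).elim
    rw [ht0] at e1
    have hsneg : s < 0 := sneg s (by linarith [e1])
    have hus : u = (s : ℂ) := Complex.ext rfl (by simpa using ht0)
    rw [hus] at huz
    have eim : s * (2*(1+z.re)*z.im) = z.im := by
      have := congrArg Complex.im huz
      simp [Complex.mul_im, Complex.add_im, Complex.add_re, pow_succ, pow_zero] at this
      nlinarith [this]
    have ere : s * ((1+z.re)^2 - z.im^2) = z.re := by
      have := congrArg Complex.re huz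
      simp [Complex.mul_re, Complex.add_im, Complex.add_re, pow_succ, pow_zero] at this
      nlinarith [this]
    have hfac2 : z.im * (2*s*(1+z.re) - 1) = 0 := by linarith [eim]; 
    rcases mul_eq_zero.mp hfac2 with h' | h'
    · exact hbim h'
    · have hb2 : 0 < z.im^2 := lt_of_le_of_ne (sq_nonneg _) (Ne.symm (pow_ne_zero 2 hbim))
      exact quad_aux s z.re z.im hsneg hb2 (by linarith [h']) ere
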